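/- Let a₁, a₋₁ : ℝ → ℝ be continuously differentiable with a_j and ∂_x a_j bounded, and let f₁, f₋₁ : ℝ → ℝ be continuously differentiable with f_j and ∂_x f_j square-integrable (j ∈ {−1,1}). Then | Σ_{j∈{±1}} ∫_ℝ a_j·f_j·∂_x f_{−j} dx − (1/2)·∫_ℝ (a_{−1} − a₁)·(f₁ + f_{−1})·∂_x(f₁ − f_{−1}) dx | ≤ ( ‖∂_x a₁‖_{L^∞} + ‖∂_x a_{−1}‖_{L^∞} )·( ‖f₁‖²_{L²} + ‖f₋₁‖²_{L²} ). -/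

import Mathlib

open MeasureTheory

/-- A product of two continuous functions with integrable squares is integrable. -/
lemma aux_mul_int_of_sq (u v : ℝ → ℝ) (hu : Continuous u) (hv : Continuous v)
    (hu2 : Integrable (fun x => (u x) ^ 2)) (hv2 : Integrable (fun x => (v x) ^ 2)) :
    Integrable (fun x => u x * v x) := by
  refine Integrable.mono' ((hu2.add hv2).const_mul (1 / 2))
    (hu.mul hv).aestronglyMeasurable ?_
  filter_upwards with x
  have h : |u x * v x| ≤ 1 / 2 * (u x ^ 2 + v x ^ 2) := by
    rw [abs_mul]
    nlinarith [sq_nonneg (|u x| - |v x|), sq_abs (u x), sq_abs (v x), abs_nonneg (u x),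
      abs_nonneg (v x)]
  rw [Real.norm_eq_abs]; exact h

/-- A bounded measurable function times an integrable function is integrable. -/
lemma aux_bdd_mul_int (g h : ℝ → ℝ) (hgc : Continuous g) (hgB : ∃ M, ∀ x, |g x| ≤ M)
    (hh : Integrable h) : Integrable (fun x => g x * h x) :=
  hh.bdd_mul hgc.aestronglyMeasurable (c := hgB.choose)
    (ae_of_all _ fun x => by simpa [Real.norm_eq_abs] using hgB.choose_spec x)

/-- The square of a sum of continuous functions with integrable squares is integrable. -/
lemma aux_add_sq_int (u v : ℝ → ℝ) (hu : Continuous u) (hv : Continuous v)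
    (hu2 : Integrable (fun x => (u x) ^ 2)) (hv2 : Integrable (fun x => (v x) ^ 2)) :
    Integrable (fun x => (u x + v x) ^ 2) := by
  refine Integrable.mono' ((hu2.add hv2).const_mul 2)
    (((hu.add hv).pow 2).aestronglyMeasurable) ?_
  filter_upwards with x
  have h : (u x + v x) ^ 2 ≤ 2 * (u x ^ 2 + v x ^ 2) := by nlinarith [sq_nonneg (u x - v x)]
  simpa [Real.norm_eq_abs, abs_of_nonneg (sq_nonneg (u x + v x))] using h

/-- Integration by parts on ℝ with bounded `g`, `g'` and integrable `F`, `F'`. -/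
lemma aux_ibp (g g' F F' : ℝ → ℝ)
    (hg : ∀ x, HasDerivAt g (g' x) x) (hF : ∀ x, HasDerivAt F (F' x) x)
    (hgc : Continuous g) (hg'c : Continuous g')
    (hgB : ∃ M, ∀ x, |g x| ≤ M) (hg'B : ∃ M, ∀ x, |g' x| ≤ M)
    (hFint : Integrable F) (hF'int : Integrable F') :
    ∫ x : ℝ, g x * F' x = -∫ x : ℝ, g' x * F x :=
  integral_mul_deriv_eq_deriv_mul_of_integrable (fun x _ => hg x) (fun x _ => hF x)
    (aux_bdd_mul_int g F' hgc hgB hF'int)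
    (aux_bdd_mul_int g' F hg'c hg'B hFint)
    (aux_bdd_mul_int g F hgc hgB hFint)

set_option maxHeartbeats 1000000 in
/-- Rewriting the mixed highest-order terms: if `a₁, a₋₁` are C¹ with `a_j`, `∂ₓa_j`
bounded and `f₁, f₋₁` are C¹ with `f_j`, `∂ₓf_j` square-integrable, then
| Σ_{j∈{±1}} ∫ a_j·f_j·∂ₓf_{−j} dx − (1/2)∫ (a₋₁ − a₁)(f₁ + f₋₁)·∂ₓ(f₁ − f₋₁) dx |
  ≤ (‖∂ₓa₁‖_{L^∞} + ‖∂ₓa₋₁‖_{L^∞})(‖f₁‖²_{L²} + ‖f₋₁‖²_{L²}). -/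
theorem mixed_terms_rewrite (a1 am1 f1 fm1 : ℝ → ℝ)
    (ha1 : ContDiff ℝ 1 a1) (ham1 : ContDiff ℝ 1 am1)
    (ha1B : ∃ M, ∀ x, |a1 x| ≤ M) (ha1B' : ∃ M, ∀ x, |deriv a1 x| ≤ M)
    (ham1B : ∃ M, ∀ x, |am1 x| ≤ M) (ham1B' : ∃ M, ∀ x, |deriv am1 x| ≤ M)
    (hf1 : ContDiff ℝ 1 f1) (hfm1 : ContDiff ℝ 1 fm1)
    (hf1sq : Integrable (fun x => (f1 x) ^ 2))
    (hf1sq' : Integrable (fun x => (deriv f1 x) ^ 2))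
    (hfm1sq : Integrable (fun x => (fm1 x) ^ 2))
    (hfm1sq' : Integrable (fun x => (deriv fm1 x) ^ 2)) :
    |((∫ x : ℝ, a1 x * f1 x * deriv fm1 x) + (∫ x : ℝ, am1 x * fm1 x * deriv f1 x))
        - (1 / 2) * ∫ x : ℝ, (am1 x - a1 x) * (f1 x + fm1 x) * (deriv f1 x - deriv fm1 x)|
      ≤ ((⨆ x : ℝ, |deriv a1 x|) + (⨆ x : ℝ, |deriv am1 x|)) *
          ((∫ x : ℝ, (f1 x) ^ 2) + (∫ x : ℝ, (fm1 x) ^ 2)) := by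
  -- continuity
  have ca1 : Continuous a1 := ha1.continuous
  have cam1 : Continuous am1 := ham1.continuous
  have cf1 : Continuous f1 := hf1.continuous
  have cfm1 : Continuous fm1 := hfm1.continuous
  have ca1' : Continuous (deriv a1) := ha1.continuous_deriv le_rfl
  have cam1' : Continuous (deriv am1) := ham1.continuous_deriv le_rfl
  have cf1' : Continuous (deriv f1) := hf1.continuous_deriv le_rfl
  have cfm1' : Continuous (deriv fm1) := hfm1.continuous_deriv le_rfl
  -- derivatives
  have hd_a1 : ∀ x, HasDerivAt a1 (deriv a1 x) x :=
    fun x => (ha1.differentiable one_ne_zero x).hasDerivAt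
  have hd_am1 : ∀ x, HasDerivAt am1 (deriv am1 x) x :=
    fun x => (ham1.differentiable one_ne_zero x).hasDerivAt
  have hd_f1 : ∀ x, HasDerivAt f1 (deriv f1 x) x :=
    fun x => (hf1.differentiable one_ne_zero x).hasDerivAt
  have hd_fm1 : ∀ x, HasDerivAt fm1 (deriv fm1 x) x :=
    fun x => (hfm1.differentiable one_ne_zero x).hasDerivAt
  -- basic integrable products
  have int_f1fm1 : Integrable (fun x => f1 x * fm1 x) :=
    aux_mul_int_of_sq _ _ cf1 cfm1 hf1sq hfm1sq
  have int_f1f1' : Integrable (fun x => f1 x * deriv f1 x) :=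
    aux_mul_int_of_sq _ _ cf1 cf1' hf1sq hf1sq'
  have int_fm1fm1' : Integrable (fun x => fm1 x * deriv fm1 x) :=
    aux_mul_int_of_sq _ _ cfm1 cfm1' hfm1sq hfm1sq'
  have int_f1fm1' : Integrable (fun x => f1 x * deriv fm1 x) :=
    aux_mul_int_of_sq _ _ cf1 cfm1' hf1sq hfm1sq'
  have int_f1'fm1 : Integrable (fun x => deriv f1 x * fm1 x) :=
    aux_mul_int_of_sq _ _ cf1' cfm1 hf1sq' hfm1sq
  have int_fm1f1' : Integrable (fun x => fm1 x * deriv f1 x) :=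
    aux_mul_int_of_sq _ _ cfm1 cf1' hfm1sq hf1sq'
  -- the three integrands in the statement are integrable
  have h1int : Integrable (fun x => a1 x * f1 x * deriv fm1 x) := by
    have := aux_bdd_mul_int a1 (fun x => f1 x * deriv fm1 x) ca1 ha1B int_f1fm1'
    simpa [mul_assoc] using this
  have h2int : Integrable (fun x => am1 x * fm1 x * deriv f1 x) := by
    have := aux_bdd_mul_int am1 (fun x => fm1 x * deriv f1 x) cam1 ham1B int_fm1f1'
    simpa [mul_assoc] using this
  have int_sum_sq : Integrable (fun x => (f1 x + fm1 x) ^ 2) :=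
    aux_add_sq_int _ _ cf1 cfm1 hf1sq hfm1sq
  have int_diff_sq : Integrable (fun x => (deriv f1 x - deriv fm1 x) ^ 2) := by
    have := aux_add_sq_int (deriv f1) (fun x => -(deriv fm1 x)) cf1' cfm1'.neg hf1sq'
      (by simpa using hfm1sq')
    simpa [sub_eq_add_neg] using this
  have h3int : Integrable
      (fun x => (am1 x - a1 x) * (f1 x + fm1 x) * (deriv f1 x - deriv fm1 x)) := by
    have hbdd : ∃ M, ∀ x, |am1 x - a1 x| ≤ M := by
      obtain ⟨M1, hM1⟩ := ham1B; obtain ⟨M2, hM2⟩ := ha1B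
      exact ⟨M1 + M2, fun x => (abs_sub (am1 x) (a1 x)).trans
        (add_le_add (hM1 x) (hM2 x))⟩
    have hprod : Integrable (fun x => (f1 x + fm1 x) * (deriv f1 x - deriv fm1 x)) :=
      aux_mul_int_of_sq _ _ (cf1.add cfm1) (cf1'.sub cfm1') int_sum_sq int_diff_sq
    have := aux_bdd_mul_int (fun x => am1 x - a1 x) _ (cam1.sub ca1) hbdd hprod
    simpa [mul_assoc] using this
  -- bounded combinations
  obtain ⟨Ma, hMa⟩ := ha1B; obtain ⟨Mb, hMb⟩ := ham1B
  obtain ⟨Ma', hMa'⟩ := ha1B'; obtain ⟨Mb', hMb'⟩ := ham1B'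
  have hg1B : ∃ M, ∀ x, |(a1 x + am1 x) / 2| ≤ M :=
    ⟨(Ma + Mb) / 2, fun x => by
      have h1 := abs_le.1 (hMa x); have h2 := abs_le.1 (hMb x)
      rw [abs_le]; constructor <;> [linarith; linarith]⟩
  have hg1B' : ∃ M, ∀ x, |(deriv a1 x + deriv am1 x) / 2| ≤ M :=
    ⟨(Ma' + Mb') / 2, fun x => by
      have h1 := abs_le.1 (hMa' x); have h2 := abs_le.1 (hMb' x)
      rw [abs_le]; constructor <;> [linarith; linarith]⟩
  have hg2B : ∃ M, ∀ x, |-((am1 x - a1 x) / 4)| ≤ M :=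
    ⟨(Ma + Mb) / 4, fun x => by
      have h1 := abs_le.1 (hMa x); have h2 := abs_le.1 (hMb x)
      rw [abs_le]; constructor <;> [linarith; linarith]⟩
  have hg2B' : ∃ M, ∀ x, |-((deriv am1 x - deriv a1 x) / 4)| ≤ M :=
    ⟨(Ma' + Mb') / 4, fun x => by
      have h1 := abs_le.1 (hMa' x); have h2 := abs_le.1 (hMb' x)
      rw [abs_le]; constructor <;> [linarith; linarith]⟩
  have hg3B : ∃ M, ∀ x, |(am1 x - a1 x) / 4| ≤ M :=
    ⟨(Ma + Mb) / 4, fun x => by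
      have h1 := abs_le.1 (hMa x); have h2 := abs_le.1 (hMb x)
      rw [abs_le]; constructor <;> [linarith; linarith]⟩
  have hg3B' : ∃ M, ∀ x, |(deriv am1 x - deriv a1 x) / 4| ≤ M :=
    ⟨(Ma' + Mb') / 4, fun x => by
      have h1 := abs_le.1 (hMa' x); have h2 := abs_le.1 (hMb' x)
      rw [abs_le]; constructor <;> [linarith; linarith]⟩
  -- three integration-by-parts identities
  have ibp1 : ∫ x : ℝ, (a1 x + am1 x) / 2 * (deriv f1 x * fm1 x + f1 x * deriv fm1 x)
      = -∫ x : ℝ, (deriv a1 x + deriv am1 x) / 2 * (f1 x * fm1 x) :=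
    aux_ibp _ _ _ _
      (fun x => ((hd_a1 x).add (hd_am1 x)).div_const 2)
      (fun x => (hd_f1 x).mul (hd_fm1 x))
      ((ca1.add cam1).div_const 2) ((ca1'.add cam1').div_const 2)
      hg1B hg1B' int_f1fm1 (int_f1'fm1.add int_f1fm1')
  have ibp2 : ∫ x : ℝ, -((am1 x - a1 x) / 4) * (2 * f1 x * deriv f1 x)
      = -∫ x : ℝ, -((deriv am1 x - deriv a1 x) / 4) * (f1 x ^ 2) :=
    aux_ibp _ _ _ _
      (fun x => (((hd_am1 x).sub (hd_a1 x)).div_const 4).neg)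
      (fun x => by simpa using (hd_f1 x).fun_pow 2)
      ((cam1.sub ca1).div_const 4).neg ((cam1'.sub ca1').div_const 4).neg
      hg2B hg2B' hf1sq (by simpa [mul_assoc] using int_f1f1'.const_mul 2)
  have ibp3 : ∫ x : ℝ, (am1 x - a1 x) / 4 * (2 * fm1 x * deriv fm1 x)
      = -∫ x : ℝ, (deriv am1 x - deriv a1 x) / 4 * (fm1 x ^ 2) :=
    aux_ibp _ _ _ _
      (fun x => ((hd_am1 x).sub (hd_a1 x)).div_const 4)
      (fun x => by simpa using (hd_fm1 x).fun_pow 2)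
      ((cam1.sub ca1).div_const 4) ((cam1'.sub ca1').div_const 4)
      hg3B hg3B' hfm1sq (by simpa [mul_assoc] using int_fm1fm1'.const_mul 2)
  -- integrability of the P pieces
  have hP1int : Integrable (fun x => (a1 x + am1 x) / 2 *
      (deriv f1 x * fm1 x + f1 x * deriv fm1 x)) :=
    aux_bdd_mul_int _ _ ((ca1.add cam1).div_const 2) hg1B (int_f1'fm1.add int_f1fm1')
  have hP2int : Integrable (fun x => -((am1 x - a1 x) / 4) * (2 * f1 x * deriv f1 x)) :=
    aux_bdd_mul_int _ _ ((cam1.sub ca1).div_const 4).neg hg2B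
      (by simpa [mul_assoc] using int_f1f1'.const_mul 2)
  have hP3int : Integrable (fun x => (am1 x - a1 x) / 4 * (2 * fm1 x * deriv fm1 x)) :=
    aux_bdd_mul_int _ _ ((cam1.sub ca1).div_const 4) hg3B
      (by simpa [mul_assoc] using int_fm1fm1'.const_mul 2)
  -- integrability of the Q pieces
  have hQ1int : Integrable (fun x => (deriv a1 x + deriv am1 x) / 2 * (f1 x * fm1 x)) :=
    aux_bdd_mul_int _ _ ((ca1'.add cam1').div_const 2) hg1B' int_f1fm1
  have hQ2int : Integrable (fun x => -((deriv am1 x - deriv a1 x) / 4) * (f1 x ^ 2)) :=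
    aux_bdd_mul_int _ _ ((cam1'.sub ca1').div_const 4).neg hg2B' hf1sq
  have hQ3int : Integrable (fun x => (deriv am1 x - deriv a1 x) / 4 * (fm1 x ^ 2)) :=
    aux_bdd_mul_int _ _ ((cam1'.sub ca1').div_const 4) hg3B' hfm1sq
  -- rewrite the LHS as a single integral of lower-order terms
  set E : ℝ → ℝ := fun x => -((deriv a1 x + deriv am1 x) / 2 * (f1 x * fm1 x)
      + -((deriv am1 x - deriv a1 x) / 4) * (f1 x ^ 2)
      + (deriv am1 x - deriv a1 x) / 4 * (fm1 x ^ 2)) with hE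
  have hEint : Integrable E := ((hQ1int.add hQ2int).add hQ3int).neg
  have h12int : Integrable (fun x => a1 x * f1 x * deriv fm1 x
      + am1 x * fm1 x * deriv f1 x) := h1int.add h2int
  have hP12int : Integrable (fun x => (a1 x + am1 x) / 2 *
      (deriv f1 x * fm1 x + f1 x * deriv fm1 x)
      + -((am1 x - a1 x) / 4) * (2 * f1 x * deriv f1 x)) := hP1int.add hP2int
  have hQ12int : Integrable (fun x => (deriv a1 x + deriv am1 x) / 2 * (f1 x * fm1 x)
      + -((deriv am1 x - deriv a1 x) / 4) * (f1 x ^ 2)) := hQ1int.add hQ2int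
  have key : ((∫ x : ℝ, a1 x * f1 x * deriv fm1 x) + (∫ x : ℝ, am1 x * fm1 x * deriv f1 x))
      - (1 / 2) * ∫ x : ℝ, (am1 x - a1 x) * (f1 x + fm1 x) * (deriv f1 x - deriv fm1 x)
      = ∫ x : ℝ, E x := by
    have split : ∫ x : ℝ, (a1 x * f1 x * deriv fm1 x + am1 x * fm1 x * deriv f1 x
          - 1 / 2 * ((am1 x - a1 x) * (f1 x + fm1 x) * (deriv f1 x - deriv fm1 x)))
        = ((∫ x : ℝ, a1 x * f1 x * deriv fm1 x) + (∫ x : ℝ, am1 x * fm1 x * deriv f1 x))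
          - (1 / 2) * ∫ x : ℝ, (am1 x - a1 x) * (f1 x + fm1 x) * (deriv f1 x - deriv fm1 x) := by
      rw [integral_sub h12int (h3int.const_mul (1 / 2 : ℝ)),
        integral_add h1int h2int, integral_const_mul]
    rw [← split]
    have e2 : (fun x : ℝ => a1 x * f1 x * deriv fm1 x + am1 x * fm1 x * deriv f1 x
          - 1 / 2 * ((am1 x - a1 x) * (f1 x + fm1 x) * (deriv f1 x - deriv fm1 x)))
        = (fun x : ℝ => (a1 x + am1 x) / 2 * (deriv f1 x * fm1 x + f1 x * deriv fm1 x)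
          + -((am1 x - a1 x) / 4) * (2 * f1 x * deriv f1 x)
          + (am1 x - a1 x) / 4 * (2 * fm1 x * deriv fm1 x)) := by
      funext x; ring
    rw [e2, integral_add hP12int hP3int, integral_add hP1int hP2int,
      ibp1, ibp2, ibp3]
    have e3 : ∫ x : ℝ, E x
        = -(((∫ x : ℝ, (deriv a1 x + deriv am1 x) / 2 * (f1 x * fm1 x))
            + ∫ x : ℝ, -((deriv am1 x - deriv a1 x) / 4) * (f1 x ^ 2))
            + ∫ x : ℝ, (deriv am1 x - deriv a1 x) / 4 * (fm1 x ^ 2)) := by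
      rw [hE]
      rw [show (fun x : ℝ => -((deriv a1 x + deriv am1 x) / 2 * (f1 x * fm1 x)
          + -((deriv am1 x - deriv a1 x) / 4) * (f1 x ^ 2)
          + (deriv am1 x - deriv a1 x) / 4 * (fm1 x ^ 2)))
        = (fun x : ℝ => -(((deriv a1 x + deriv am1 x) / 2 * (f1 x * fm1 x)
          + -((deriv am1 x - deriv a1 x) / 4) * (f1 x ^ 2))
          + (deriv am1 x - deriv a1 x) / 4 * (fm1 x ^ 2))) from funext fun x => by ring]
      rw [integral_neg, integral_add hQ12int hQ3int, integral_add hQ1int hQ2int]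
    rw [e3]; ring
  rw [key]
  -- bound the integral
  set A := ⨆ x : ℝ, |deriv a1 x| with hA
  set B := ⨆ x : ℝ, |deriv am1 x| with hB
  have hAub : ∀ x, |deriv a1 x| ≤ A := fun x =>
    le_ciSup ⟨Ma', by rintro _ ⟨y, rfl⟩; exact hMa' y⟩ x
  have hBub : ∀ x, |deriv am1 x| ≤ B := fun x =>
    le_ciSup ⟨Mb', by rintro _ ⟨y, rfl⟩; exact hMb' y⟩ x
  have hA0 : 0 ≤ A := (abs_nonneg _).trans (hAub 0)
  have hB0 : 0 ≤ B := (abs_nonneg _).trans (hBub 0)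
  have hφint : Integrable (fun x => (A + B) * (f1 x ^ 2 + fm1 x ^ 2)) :=
    (hf1sq.add hfm1sq).const_mul _
  have hbound : |∫ x : ℝ, E x| ≤ ∫ x : ℝ, (A + B) * (f1 x ^ 2 + fm1 x ^ 2) := by
    have := norm_integral_le_of_norm_le (μ := (volume : Measure ℝ)) (f := E) hφint ?_
    · simpa [Real.norm_eq_abs] using this
    · filter_upwards with x
      have ha := abs_le.1 (hAub x)
      have hb := abs_le.1 (hBub x)
      have hpq1 : 0 ≤ f1 x ^ 2 + fm1 x ^ 2 + 2 * (f1 x * fm1 x) := by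
        nlinarith [sq_nonneg (f1 x + fm1 x)]
      have hpq2 : 0 ≤ f1 x ^ 2 + fm1 x ^ 2 - 2 * (f1 x * fm1 x) := by
        nlinarith [sq_nonneg (f1 x - fm1 x)]
      rw [Real.norm_eq_abs, hE, abs_le]
      constructor
      · nlinarith [mul_nonneg (by linarith : (0:ℝ) ≤ A + B - (deriv a1 x + deriv am1 x)) hpq2,
          mul_nonneg (by linarith : (0:ℝ) ≤ A + B + (deriv a1 x + deriv am1 x)) hpq1,
          mul_nonneg (by linarith : (0:ℝ) ≤ A + B - (deriv am1 x - deriv a1 x)) (sq_nonneg (f1 x)),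
          mul_nonneg (by linarith : (0:ℝ) ≤ A + B + (deriv am1 x - deriv a1 x)) (sq_nonneg (fm1 x)),
          mul_nonneg (by linarith : (0:ℝ) ≤ A + B) (by nlinarith [sq_nonneg (f1 x), sq_nonneg (fm1 x)] : (0:ℝ) ≤ f1 x ^ 2 + fm1 x ^ 2)]
      · nlinarith [mul_nonneg (by linarith : (0:ℝ) ≤ A + B - (deriv a1 x + deriv am1 x)) hpq1,
          mul_nonneg (by linarith : (0:ℝ) ≤ A + B + (deriv a1 x + deriv am1 x)) hpq2,
          mul_nonneg (by linarith : (0:ℝ) ≤ A + B + (deriv am1 x - deriv a1 x)) (sq_nonneg (f1 x)),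
          mul_nonneg (by linarith : (0:ℝ) ≤ A + B - (deriv am1 x - deriv a1 x)) (sq_nonneg (fm1 x)),
          mul_nonneg (by linarith : (0:ℝ) ≤ A + B) (by nlinarith [sq_nonneg (f1 x), sq_nonneg (fm1 x)] : (0:ℝ) ≤ f1 x ^ 2 + fm1 x ^ 2)]
  calc |∫ x : ℝ, E x| ≤ ∫ x : ℝ, (A + B) * (f1 x ^ 2 + fm1 x ^ 2) := hbound
    _ = (A + B) * ((∫ x : ℝ, (f1 x) ^ 2) + (∫ x : ℝ, (fm1 x) ^ 2)) := by
        rw [integral_const_mul, integral_add hf1sq hfm1sq]
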